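/- Let (Ω, ℱ, P) be a probability space, 𝒢 ⊆ ℱ a sub-σ-algebra, E = EuclideanSpace ℝ (Fin m), k ∈ ℕ with k ≥ 1, and for each i ∈ {1,…,k} let g_i : Ω → E be 𝒢-measurable and bounded, s_i : Ω → E with ‖s_i‖² integrable, α_i ≥ λ for a constant λ > 0, and let K₆ > 0, K₇ ≥ 0, K₈ ≥ 0 be constants. Suppose almost surely: (i) ⟪g_i, E[s_i ∣ 𝒢]⟫ ≤ −K₆‖g_i‖² for each i, and (ii) E[‖s_i‖² ∣ 𝒢] ≤ K₇‖g_i‖² + K₈ for each i. Define b = Σ_{i=1}^k ‖s_i‖ and G = −Σ_{i=1}^k α_i ⟪g_i, s_i⟫. Then almost surely E[b² ∣ 𝒢] ≤ (k K₇ / (λ K₆)) · E[G ∣ 𝒢] + k² K₈. -/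

import Mathlib

open MeasureTheory RealInnerProductSpace

private lemma euclid_abs_apply_le {d : ℕ} (x : EuclideanSpace ℝ (Fin d)) (j : Fin d) :
    |x j| ≤ ‖x‖ := by
  rw [EuclideanSpace.norm_eq, ← Real.sqrt_sq_eq_abs]
  apply Real.sqrt_le_sqrt
  rw [← sq_abs (x j), ← Real.norm_eq_abs]
  exact Finset.single_le_sum (f := fun i => ‖x i‖ ^ 2) (fun i _ => by positivity)
    (Finset.mem_univ j)

private lemma condexp_clm_comm {Ω : Type*} {m mΩ : MeasurableSpace Ω} (hm : m ≤ mΩ)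
    (μ : Measure Ω) [IsFiniteMeasure μ]
    {E F : Type*} [NormedAddCommGroup E] [NormedSpace ℝ E] [CompleteSpace E]
    [NormedAddCommGroup F] [NormedSpace ℝ F] [CompleteSpace F]
    (T : E →L[ℝ] F) {f : Ω → E} (hf : Integrable f μ) :
    (fun ω => T ((μ[f|m]) ω)) =ᵐ[μ] μ[fun ω => T (f ω)|m] := by
  refine ae_eq_condExp_of_forall_setIntegral_eq hm (T.integrable_comp hf) ?_ ?_ ?_
  · intro A _ _
    exact (T.integrable_comp integrable_condExp).integrableOn
  · intro A hA hμA
    rw [T.integral_comp_comm integrable_condExp.integrableOn,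
      setIntegral_condExp hm hf hA, T.integral_comp_comm hf.integrableOn]
  · exact (T.continuous.comp_stronglyMeasurable stronglyMeasurable_condExp).aestronglyMeasurable

private lemma condexp_inner_left_aux {Ω : Type*} {m mΩ : MeasurableSpace Ω} (hm : m ≤ mΩ)
    (μ : Measure Ω) [IsFiniteMeasure μ] [SigmaFinite (μ.trim hm)] {d : ℕ}
    {g s : Ω → EuclideanSpace ℝ (Fin d)}
    (hg : StronglyMeasurable[m] g) {C : ℝ} (hC : ∀ ω, ‖g ω‖ ≤ C)
    (hs : Integrable s μ) :
    μ[fun ω => ⟪g ω, s ω⟫|m] =ᵐ[μ] fun ω => ⟪g ω, (μ[s|m]) ω⟫ := by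
  have hgj : ∀ j : Fin d, StronglyMeasurable[m] (fun ω => g ω j) := fun j =>
    (EuclideanSpace.proj (𝕜 := ℝ) j).continuous.comp_stronglyMeasurable hg
  have hgjC : ∀ j : Fin d, ∀ ω, ‖g ω j‖ ≤ C := fun j ω =>
    le_trans (by simpa [Real.norm_eq_abs] using euclid_abs_apply_le (g ω) j) (hC ω)
  have hsj : ∀ j : Fin d, Integrable (fun ω => s ω j) μ := fun j =>
    (EuclideanSpace.proj (𝕜 := ℝ) j).integrable_comp hs
  have hmulj : ∀ j : Fin d, Integrable (fun ω => g ω j * s ω j) μ := fun j =>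
    (hsj j).bdd_mul ((hgj j).mono hm).aestronglyMeasurable
      (Filter.Eventually.of_forall (hgjC j))
  have hjq : ∀ j : Fin d,
      μ[fun ω => g ω j * s ω j|m] =ᵐ[μ] fun ω => g ω j * (μ[s|m]) ω j := by
    intro j
    refine (condExp_stronglyMeasurable_mul_of_bound hm (hgj j) (hsj j) C
      (Filter.Eventually.of_forall (hgjC j))).trans ?_
    have := (condexp_clm_comm hm μ (EuclideanSpace.proj (𝕜 := ℝ) j) hs).symm
    filter_upwards [this] with ω hω
    simp only [Pi.mul_apply]
    have hω' : (μ[fun ω => s ω j|m]) ω = (μ[s|m]) ω j := hω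
    rw [hω']
  have h1 : (fun ω => ⟪g ω, s ω⟫) = fun ω => ∑ j, g ω j * s ω j := by
    funext ω
    simp [PiLp.inner_apply, RCLike.inner_apply, mul_comm]
  have h2 : (fun ω => ⟪g ω, (μ[s|m]) ω⟫) = fun ω => ∑ j, g ω j * (μ[s|m]) ω j := by
    funext ω
    simp [PiLp.inner_apply, RCLike.inner_apply, mul_comm]
  have h3 : (fun ω => ∑ j, g ω j * s ω j) = ∑ j : Fin d, fun ω => g ω j * s ω j := by
    funext ω; simp
  rw [h1, h2, h3]
  refine (condExp_finsetSum (fun j _ => hmulj j) m).trans ?_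
  have hall := (ae_all_iff).mpr hjq
  filter_upwards [hall] with ω hω
  simp only [Finset.sum_apply]
  exact Finset.sum_congr rfl fun j _ => hω j

/-- Lemma 1.0(b) of the paper: under the stochastic descent conditions
`⟪g i, E[s i ∣ 𝒢]⟫ ≤ -K₆ ‖g i‖²` and `E[‖s i‖² ∣ 𝒢] ≤ K₇ ‖g i‖² + K₈` (a.s.),
with gossip weights `α i ≥ λ > 0`, setting `b = ∑ i ‖s i‖` and
`G = -∑ i α i ⟪g i, s i⟫`, one has a.s.
`E[b² ∣ 𝒢] ≤ (k K₇ / (λ K₆)) E[G ∣ 𝒢] + k² K₈`. -/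
theorem condexp_square_update_bound
    {Ω : Type*} {mΩ : MeasurableSpace Ω} (μ : Measure Ω) [IsProbabilityMeasure μ]
    (m : MeasurableSpace Ω) (hm : m ≤ mΩ)
    {d : ℕ} (k : ℕ) (hk : 1 ≤ k)
    (g s : Fin k → Ω → EuclideanSpace ℝ (Fin d))
    (α : Fin k → ℝ) (lam K₆ K₇ K₈ : ℝ)
    (hlam : 0 < lam) (hα : ∀ i, lam ≤ α i)
    (hK₆ : 0 < K₆) (hK₇ : 0 ≤ K₇) (hK₈ : 0 ≤ K₈)
    (hg_meas : ∀ i, StronglyMeasurable[m] (g i))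
    (hg_bdd : ∀ i, ∃ C : ℝ, ∀ ω, ‖g i ω‖ ≤ C)
    (hs_meas : ∀ i, AEStronglyMeasurable (s i) μ)
    (hs_sq_int : ∀ i, Integrable (fun ω => ‖s i ω‖ ^ 2) μ)
    (hdesc : ∀ i, ∀ᵐ ω ∂μ, ⟪g i ω, (μ[s i|m]) ω⟫ ≤ -K₆ * ‖g i ω‖ ^ 2)
    (hsq : ∀ i, ∀ᵐ ω ∂μ,
      (μ[fun ω' => ‖s i ω'‖ ^ 2|m]) ω ≤ K₇ * ‖g i ω‖ ^ 2 + K₈)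
    (b : Ω → ℝ) (hb : b = fun ω => ∑ i, ‖s i ω‖)
    (G : Ω → ℝ) (hG : G = fun ω => -∑ i, α i * ⟪g i ω, s i ω⟫) :
    ∀ᵐ ω ∂μ, (μ[fun ω' => (b ω') ^ 2|m]) ω
      ≤ ((k : ℝ) * K₇ / (lam * K₆)) * (μ[G|m]) ω + (k : ℝ) ^ 2 * K₈ := by
  classical
  -- nonnegative uniform bounds for g
  have hCex : ∀ i, ∃ C : ℝ, 0 ≤ C ∧ ∀ ω, ‖g i ω‖ ≤ C := by
    intro i; obtain ⟨C, hC⟩ := hg_bdd i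
    exact ⟨max C 0, le_max_right _ _, fun ω => le_max_of_le_left (hC ω)⟩
  choose C hC0 hCle using hCex
  -- integrabilities
  have hs_norm_int : ∀ i, Integrable (fun ω => ‖s i ω‖) μ := by
    intro i
    refine ((integrable_const (1 : ℝ)).add (hs_sq_int i)).mono' ((hs_meas i).mono hm).norm ?_
    refine Filter.Eventually.of_forall fun ω => ?_
    simp only [Pi.add_apply, Real.norm_eq_abs, abs_of_nonneg (norm_nonneg (s i ω))]
    nlinarith [sq_nonneg (‖s i ω‖ - 1), norm_nonneg (s i ω)]
  have hs_int : ∀ i, Integrable (s i) μ := fun i =>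
    (integrable_norm_iff ((hs_meas i).mono hm)).mp (hs_norm_int i)
  have hinner_int : ∀ i, Integrable (fun ω => ⟪g i ω, s i ω⟫) μ := by
    intro i
    refine ((hs_norm_int i).const_mul (C i)).mono'
      (AEStronglyMeasurable.inner ((hg_meas i).mono hm).aestronglyMeasurable ((hs_meas i).mono hm)) ?_
    refine Filter.Eventually.of_forall fun ω => ?_
    calc ‖⟪g i ω, s i ω⟫‖ ≤ ‖g i ω‖ * ‖s i ω‖ := norm_inner_le_norm _ _
      _ ≤ C i * ‖s i ω‖ := mul_le_mul_of_nonneg_right (hCle i ω) (norm_nonneg _)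
  -- b² integrable and pointwise bound
  have hb_meas : AEStronglyMeasurable[mΩ] b μ := by
    rw [hb]; exact Finset.aestronglyMeasurable_fun_sum (f := fun i ω => ‖s i ω‖) _ fun i _ => ((hs_meas i).mono hm).norm
  have hsum_sq_int : Integrable (fun ω => (k : ℝ) * ∑ i, ‖s i ω‖ ^ 2) μ :=
    (integrable_finset_sum _ fun i _ => hs_sq_int i).const_mul _
  have hb2_le : ∀ ω, b ω ^ 2 ≤ (k : ℝ) * ∑ i, ‖s i ω‖ ^ 2 := by
    intro ω
    rw [hb]
    simpa using sq_sum_le_card_mul_sum_sq (s := (Finset.univ : Finset (Fin k)))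
      (f := fun i => ‖s i ω‖)
  have hb2_meas : AEStronglyMeasurable[mΩ] (fun ω => b ω ^ 2) μ := by
    simpa [sq, Pi.mul_def] using hb_meas.mul hb_meas
  have hb2_int : Integrable (fun ω => b ω ^ 2) μ := by
    refine hsum_sq_int.mono' hb2_meas (Filter.Eventually.of_forall fun ω => ?_)
    rw [Real.norm_eq_abs, abs_of_nonneg (sq_nonneg _)]
    exact hb2_le ω
  -- step 1 : conditional expectation monotone
  have step1 : μ[fun ω => b ω ^ 2|m] ≤ᵐ[μ] μ[fun ω => (k : ℝ) * ∑ i, ‖s i ω‖ ^ 2|m] :=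
    condExp_mono hb2_int hsum_sq_int (Filter.Eventually.of_forall hb2_le)
  -- step 2 : linearity
  have step2 : μ[fun ω => (k : ℝ) * ∑ i, ‖s i ω‖ ^ 2|m]
      =ᵐ[μ] fun ω => (k : ℝ) * ∑ i, (μ[fun ω' => ‖s i ω'‖ ^ 2|m]) ω := by
    have e1 : (fun ω => (k : ℝ) * ∑ i, ‖s i ω‖ ^ 2)
        = (k : ℝ) • ∑ i : Fin k, fun ω => ‖s i ω‖ ^ 2 := by
      funext ω; simp
    rw [e1]
    refine (condExp_smul ((k : ℝ)) _ m).trans ?_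
    have hsum : μ[∑ i : Fin k, fun ω => ‖s i ω‖ ^ 2|m]
        =ᵐ[μ] ∑ i : Fin k, μ[fun ω => ‖s i ω‖ ^ 2|m] :=
      condExp_finsetSum (fun i (_ : i ∈ (Finset.univ : Finset (Fin k))) => hs_sq_int i) m
    filter_upwards [hsum] with ω hω
    simp only [Pi.smul_apply, smul_eq_mul, hω, Finset.sum_apply]
  -- step 3 : conditional expectation of G
  have hpull : ∀ i, μ[fun ω => ⟪g i ω, s i ω⟫|m]
      =ᵐ[μ] fun ω => ⟪g i ω, (μ[s i|m]) ω⟫ := fun i =>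
    condexp_inner_left_aux hm μ (hg_meas i) (hCle i) (hs_int i)
  have eG : G = ∑ i : Fin k, fun ω => (-(α i)) • ⟪g i ω, s i ω⟫ := by
    rw [hG]; funext ω
    simp [Finset.sum_apply, smul_eq_mul, neg_mul, ← Finset.sum_neg_distrib]
  have step3 : μ[G|m] =ᵐ[μ] fun ω => ∑ i, (-(α i)) * ⟪g i ω, (μ[s i|m]) ω⟫ := by
    rw [eG]
    refine (condExp_finsetSum (fun i _ => ?_) m).trans ?_
    · simpa [smul_eq_mul] using (hinner_int i).const_mul (-(α i))
    · have hall : ∀ᵐ ω ∂μ, ∀ i : Fin k, (μ[fun ω' => ⟪g i ω', s i ω'⟫|m]) ω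
          = ⟪g i ω, (μ[s i|m]) ω⟫ := ae_all_iff.mpr hpull
      have hsmul : ∀ i : Fin k, μ[fun ω => (-(α i)) • ⟪g i ω, s i ω⟫|m]
          =ᵐ[μ] (-(α i)) • μ[fun ω => ⟪g i ω, s i ω⟫|m] := fun i =>
        condExp_smul (-(α i)) _ m
      have hall2 : ∀ᵐ ω ∂μ, ∀ i : Fin k, (μ[fun ω' => (-(α i)) • ⟪g i ω', s i ω'⟫|m]) ω
          = ((-(α i)) • μ[fun ω' => ⟪g i ω', s i ω'⟫|m]) ω := ae_all_iff.mpr hsmul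
      filter_upwards [hall, hall2] with ω h1 h2
      simp only [Finset.sum_apply]
      refine Finset.sum_congr rfl fun i _ => ?_
      rw [h2 i]
      simp only [Pi.smul_apply, smul_eq_mul]
      rw [h1 i]
  -- pointwise combination
  filter_upwards [step1, step2, step3, ae_all_iff.mpr hsq, ae_all_iff.mpr hdesc]
    with ω h1 h2 h3 h4 h5
  set S := ∑ i, ‖g i ω‖ ^ 2 with hS
  have hSnn : 0 ≤ S := Finset.sum_nonneg fun i _ => sq_nonneg _
  have hA : (μ[fun ω' => b ω' ^ 2|m]) ω ≤ (k : ℝ) * K₇ * S + (k : ℝ) ^ 2 * K₈ := by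
    refine le_trans (le_trans h1 (le_of_eq h2)) ?_
    have : ∑ i, (μ[fun ω' => ‖s i ω'‖ ^ 2|m]) ω ≤ K₇ * S + k * K₈ := by
      calc ∑ i, (μ[fun ω' => ‖s i ω'‖ ^ 2|m]) ω
          ≤ ∑ i, (K₇ * ‖g i ω‖ ^ 2 + K₈) := Finset.sum_le_sum fun i _ => h4 i
        _ = K₇ * S + k * K₈ := by
          rw [Finset.sum_add_distrib, ← Finset.mul_sum]
          simp [hS]
    have hk0 : (0 : ℝ) ≤ (k : ℝ) := Nat.cast_nonneg k
    nlinarith [mul_le_mul_of_nonneg_left this hk0]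
  have hGlb : lam * K₆ * S ≤ (μ[G|m]) ω := by
    rw [h3]
    have : ∀ i : Fin k, lam * K₆ * ‖g i ω‖ ^ 2 ≤ (-(α i)) * ⟪g i ω, (μ[s i|m]) ω⟫ := by
      intro i
      have hαpos : 0 < α i := lt_of_lt_of_le hlam (hα i)
      have h5i := h5 i
      have h6 : α i * ⟪g i ω, (μ[s i|m]) ω⟫ ≤ α i * (-K₆ * ‖g i ω‖ ^ 2) :=
        mul_le_mul_of_nonneg_left h5i hαpos.le
      have h7 : lam * (K₆ * ‖g i ω‖ ^ 2) ≤ α i * (K₆ * ‖g i ω‖ ^ 2) :=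
        mul_le_mul_of_nonneg_right (hα i) (by positivity)
      nlinarith
    calc lam * K₆ * S = ∑ i, lam * K₆ * ‖g i ω‖ ^ 2 := by rw [hS, Finset.mul_sum]
      _ ≤ ∑ i, (-(α i)) * ⟪g i ω, (μ[s i|m]) ω⟫ := Finset.sum_le_sum fun i _ => this i
  have hden : (0 : ℝ) < lam * K₆ := mul_pos hlam hK₆
  have hfrac : (0 : ℝ) ≤ (k : ℝ) * K₇ / (lam * K₆) :=
    div_nonneg (by positivity) hden.le
  have hkey : (k : ℝ) * K₇ * S ≤ ((k : ℝ) * K₇ / (lam * K₆)) * (μ[G|m]) ω := by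
    calc (k : ℝ) * K₇ * S = ((k : ℝ) * K₇ / (lam * K₆)) * (lam * K₆ * S) := by
          field_simp
      _ ≤ ((k : ℝ) * K₇ / (lam * K₆)) * (μ[G|m]) ω :=
          mul_le_mul_of_nonneg_left hGlb hfrac
  linarith
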